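/- Let F : 2^V → ℝ be submodular with F(∅)=0. Then by Fenchel duality, min_{s∈B(F)} ∑_{i∈V} log(1+exp(−s_i)) = max_{p∈[0,1]^V} ( H[p] − f(p) ), where f is the Lovász extension of F and H[p] = ∑_{i∈V} ( −p_i log p_i − (1−p_i) log(1−p_i) ) is the entropy of independent Bernoulli variables with means p. -/

import Mathlib

/-- A set function is submodular iff it has diminishing marginal gains. -/
def Submodular {V : Type*} [DecidableEq V] (F : Finset V → ℝ) : Prop :=
  ∀ A B : Finset V, A ⊆ B → ∀ x ∉ B,
    F (insert x B) - F B ≤ F (insert x A) - F A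

/-- The base polytope `B(F)` of a normalized submodular function. -/
def basePolytope {V : Type*} [Fintype V] [DecidableEq V] (F : Finset V → ℝ) :
    Set (V → ℝ) :=
  {s | (∀ A : Finset V, ∑ i ∈ A, s i ≤ F A) ∧ ∑ i : V, s i = F Finset.univ}

/-- The Lovász extension of a normalized set function on `[0,1]^V`, via the
level-set integral formula `f(p) = ∫₀¹ F({i : pᵢ ≥ t}) dt`. -/
noncomputable def lovasz {V : Type*} [Fintype V] [DecidableEq V]
    (F : Finset V → ℝ) (p : V → ℝ) : ℝ :=
  ∫ t in (0:ℝ)..1, F (Finset.univ.filter fun i => t ≤ p i)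

/-- The entropy of independent Bernoulli variables with means `p`
(with the convention `0·log 0 = 0`, which holds since `Real.log 0 = 0`). -/
noncomputable def bernoulliEntropy {V : Type*} [Fintype V] (p : V → ℝ) : ℝ :=
  ∑ i : V, (-(p i) * Real.log (p i) - (1 - p i) * Real.log (1 - p i))


open Finset Real

namespace Stmt12Aux

variable {V : Type*} [Fintype V] [DecidableEq V] {n : ℕ}

/-- prefix sets of an enumeration -/
def pref (e : Fin n ≃ V) (k : ℕ) : Finset V :=
  (Finset.univ.filter fun j : Fin n => (j : ℕ) < k).image e

/-- the greedy vertex -/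
noncomputable def greedy (F : Finset V → ℝ) (e : Fin n ≃ V) (i : V) : ℝ :=
  F (pref e ((e.symm i : ℕ) + 1)) - F (pref e (e.symm i))

lemma mem_pref {e : Fin n ≃ V} {k : ℕ} {i : V} :
    i ∈ pref e k ↔ ((e.symm i : ℕ) < k) := by
  constructor
  · intro h
    simp only [pref, Finset.mem_image, Finset.mem_filter, Finset.mem_univ, true_and] at h
    obtain ⟨j, hj, rfl⟩ := h
    simpa using hj
  · intro h
    simp only [pref, Finset.mem_image, Finset.mem_filter, Finset.mem_univ, true_and]
    exact ⟨e.symm i, h, e.apply_symm_apply i⟩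

lemma pref_zero (e : Fin n ≃ V) : pref e 0 = ∅ := by
  ext i; simp [mem_pref]

lemma pref_univ (e : Fin n ≃ V) {k : ℕ} (h : n ≤ k) : pref e k = Finset.univ := by
  ext i; simp only [mem_pref, Finset.mem_univ, iff_true]
  exact lt_of_lt_of_le (e.symm i).isLt h

lemma pref_succ (e : Fin n ≃ V) (j : Fin n) :
    pref e ((j : ℕ) + 1) = insert (e j) (pref e (j : ℕ)) := by
  ext i
  simp only [mem_pref, Finset.mem_insert]
  constructor
  · intro h
    rcases Nat.lt_succ_iff_lt_or_eq.mp h with h | h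
    · exact Or.inr h
    · left
      have : e.symm i = j := Fin.ext h
      rw [← this, e.apply_symm_apply]
  · rintro (rfl | h)
    · simp [Nat.lt_succ_iff]
    · exact Nat.lt_succ_of_lt h

lemma not_mem_pref (e : Fin n ≃ V) (j : Fin n) : e j ∉ pref e (j : ℕ) := by
  simp [mem_pref]

lemma teles (G : ℕ → ℝ) : ∑ j : Fin n, (G ((j : ℕ) + 1) - G (j : ℕ)) = G n - G 0 := by
  rw [Fin.sum_univ_eq_sum_range (fun k => G (k + 1) - G k)]
  exact Finset.sum_range_sub G n

variable {F : Finset V → ℝ}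

lemma greedy_apply (F : Finset V → ℝ) (e : Fin n ≃ V) (j : Fin n) :
    greedy F e (e j) = F (pref e ((j : ℕ) + 1)) - F (pref e (j : ℕ)) := by
  simp [greedy]

lemma greedy_packing (hsub : Submodular F) (hF0 : F ∅ = 0) (e : Fin n ≃ V) (B : Finset V) :
    ∑ i ∈ B, greedy F e i ≤ F B := by
  have h1 : ∑ i ∈ B, greedy F e i
      = ∑ j : Fin n, (if e j ∈ B then greedy F e (e j) else 0) := by
    rw [Equiv.sum_comp e (fun i => if i ∈ B then greedy F e i else 0),
      Finset.sum_ite_mem, Finset.univ_inter]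
  rw [h1]
  have h2 : ∀ j : Fin n, (if e j ∈ B then greedy F e (e j) else 0)
      ≤ F (B ∩ pref e ((j : ℕ) + 1)) - F (B ∩ pref e (j : ℕ)) := by
    intro j
    by_cases he : e j ∈ B
    · rw [if_pos he, greedy_apply]
      have hs := hsub (B ∩ pref e (j : ℕ)) (pref e (j : ℕ)) Finset.inter_subset_right
        (e j) (not_mem_pref e j)
      have e1 : insert (e j) (pref e (j : ℕ)) = pref e ((j : ℕ) + 1) := (pref_succ e j).symm
      have e2 : insert (e j) (B ∩ pref e (j : ℕ)) = B ∩ pref e ((j : ℕ) + 1) := by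
        rw [pref_succ e j, Finset.insert_inter_distrib]
        congr 1
        exact (Finset.insert_eq_self.mpr he).symm ▸ rfl
      rw [e1, e2] at hs
      linarith
    · rw [if_neg he]
      have : B ∩ pref e ((j : ℕ) + 1) = B ∩ pref e (j : ℕ) := by
        rw [pref_succ e j, Finset.inter_insert_of_notMem he]
      rw [this]
      simp
  calc ∑ j : Fin n, (if e j ∈ B then greedy F e (e j) else 0)
      ≤ ∑ j : Fin n, (F (B ∩ pref e ((j : ℕ) + 1)) - F (B ∩ pref e (j : ℕ))) :=
        Finset.sum_le_sum fun j _ => h2 j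
    _ = F (B ∩ pref e n) - F (B ∩ pref e 0) := teles (fun k => F (B ∩ pref e k))
    _ = F B := by rw [pref_univ e le_rfl, pref_zero, Finset.inter_univ,
        Finset.inter_empty, hF0, sub_zero]

lemma greedy_total (hF0 : F ∅ = 0) (e : Fin n ≃ V) :
    ∑ i : V, greedy F e i = F Finset.univ := by
  rw [← Equiv.sum_comp e (greedy F e)]
  have : ∀ j : Fin n, greedy F e (e j)
      = F (pref e ((j : ℕ) + 1)) - F (pref e (j : ℕ)) := greedy_apply F e
  calc ∑ j : Fin n, greedy F e (e j)
      = ∑ j : Fin n, (F (pref e ((j : ℕ) + 1)) - F (pref e (j : ℕ))) :=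
        Finset.sum_congr rfl fun j _ => this j
    _ = F (pref e n) - F (pref e 0) := teles (fun k => F (pref e k))
    _ = F Finset.univ := by rw [pref_univ e le_rfl, pref_zero, hF0, sub_zero]

lemma pref_sum (hF0 : F ∅ = 0) (e : Fin n ≃ V) (k : ℕ) :
    ∑ i ∈ pref e k, greedy F e i = F (pref e k) := by
  induction k with
  | zero => simp [pref_zero, hF0]
  | succ k ih =>
    by_cases hk : k < n
    · set j : Fin n := ⟨k, hk⟩ with hj
      have hjk : (j : ℕ) = k := rfl
      rw [← hjk, pref_succ e j, Finset.sum_insert (not_mem_pref e j), greedy_apply, hjk, ih,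
        ← hjk, pref_succ e j]
      ring
    · push_neg at hk
      rw [pref_univ e hk, pref_univ e (le_trans hk (Nat.le_succ k))] at *
      exact ih

lemma filter_eq_pref {p : V → ℝ} (e : Fin n ≃ V) (hA : Antitone fun j => p (e j)) (t : ℝ) :
    ∃ k, Finset.univ.filter (fun i => t ≤ p i) = pref e k := by
  classical
  set D : Finset (Fin n) := Finset.univ.filter (fun j => t ≤ p (e j)) with hD
  have hlow : ∀ j j' : Fin n, j ≤ j' → j' ∈ D → j ∈ D := by
    intro j j' hle hj'
    simp only [hD, Finset.mem_filter, Finset.mem_univ, true_and] at hj' ⊢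
    exact le_trans hj' (hA hle)
  have hmem : ∀ j : Fin n, j ∈ D ↔ (j : ℕ) < D.card := by
    intro j
    constructor
    · intro hj
      have hsub : Finset.Iic j ⊆ D := fun j' hj' => hlow j' j (Finset.mem_Iic.mp hj') hj
      have := Finset.card_le_card hsub
      rw [Fin.card_Iic] at this
      omega
    · intro h
      by_contra hj
      have hsub : D ⊆ Finset.Iio j := by
        intro j' hj'
        refine Finset.mem_Iio.mpr (lt_of_not_ge fun hle => hj (hlow j j' hle hj'))
      have := Finset.card_le_card hsub
      rw [Fin.card_Iio] at this
      omega
  refine ⟨D.card, ?_⟩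
  ext i
  simp only [Finset.mem_filter, Finset.mem_univ, true_and, mem_pref]
  have h1 : t ≤ p i ↔ e.symm i ∈ D := by
    simp [hD, e.apply_symm_apply]
  rw [h1, hmem]

lemma F_filter_eq (hF0 : F ∅ = 0) {p : V → ℝ} (e : Fin n ≃ V)
    (hA : Antitone fun j => p (e j)) (t : ℝ) :
    F (Finset.univ.filter fun i => t ≤ p i)
      = ∑ i ∈ Finset.univ.filter (fun i => t ≤ p i), greedy F e i := by
  obtain ⟨k, hk⟩ := filter_eq_pref e hA t
  rw [hk, pref_sum hF0]

lemma exists_sorted (p : V → ℝ) :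
    ∃ e : Fin (Fintype.card V) ≃ V, Antitone fun j => p (e j) := by
  let e0 := (Fintype.equivFin V).symm
  let σ := Tuple.sort (fun j => -p (e0 j))
  refine ⟨σ.trans e0, ?_⟩
  intro a b hab
  have := Tuple.monotone_sort (fun j => -p (e0 j)) hab
  simpa using this

end Stmt12Aux

namespace Stmt12Aux2
open MeasureTheory

lemma ite_eq_indicator (c a : ℝ) :
    (fun t : ℝ => if t ≤ c then a else 0) = Set.indicator {x | x ≤ c} (fun _ => a) := by
  funext t
  by_cases h : t ≤ c <;> simp [Set.indicator, h]

lemma integrable_ite (c a : ℝ) :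
    IntervalIntegrable (fun t : ℝ => if t ≤ c then a else 0) volume 0 1 := by
  rw [ite_eq_indicator, intervalIntegrable_iff]
  have : {x : ℝ | x ≤ c} = Set.Iic c := rfl
  rw [this]
  exact ((integrableOn_const_iff (C := a) (by finiteness)).mpr (Or.inr measure_Ioc_lt_top)).indicator measurableSet_Iic

lemma integral_ite {c : ℝ} (hc0 : 0 ≤ c) (hc1 : c ≤ 1) (a : ℝ) :
    ∫ t in (0:ℝ)..1, (if t ≤ c then a else 0) = c * a := by
  rw [ite_eq_indicator, intervalIntegral.integral_indicator ⟨hc0, hc1⟩,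
    intervalIntegral.integral_const, smul_eq_mul, sub_zero]

variable {V : Type*} [Fintype V] [DecidableEq V]

lemma integral_layer (p s : V → ℝ) (hp : ∀ i, p i ∈ Set.Icc (0:ℝ) 1) :
    ∫ t in (0:ℝ)..1, ∑ i ∈ Finset.univ.filter (fun i => t ≤ p i), s i
      = ∑ i : V, p i * s i := by
  have h1 : ∀ t : ℝ, ∑ i ∈ Finset.univ.filter (fun i => t ≤ p i), s i
      = ∑ i : V, if t ≤ p i then s i else 0 := by
    intro t
    rw [Finset.sum_filter]
  simp only [h1]
  rw [intervalIntegral.integral_finset_sum (fun i _ => integrable_ite (p i) (s i))]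
  exact Finset.sum_congr rfl fun i _ => integral_ite (hp i).1 (hp i).2 (s i)

lemma integrable_layer (p s : V → ℝ) :
    IntervalIntegrable
      (fun t => ∑ i ∈ Finset.univ.filter (fun i => t ≤ p i), s i) volume 0 1 := by
  have h1 : (fun t => ∑ i ∈ Finset.univ.filter (fun i => t ≤ p i), s i)
      = fun t => ∑ i : V, if t ≤ p i then s i else 0 := by
    funext t; rw [Finset.sum_filter]
  rw [h1]
  have h2 : (fun t : ℝ => ∑ i : V, if t ≤ p i then s i else 0)
      = ∑ i : V, fun t : ℝ => if t ≤ p i then s i else 0 := by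
    funext t; simp
  rw [h2]
  exact IntervalIntegrable.sum _ (fun i _ => integrable_ite (p i) (s i))

end Stmt12Aux2

namespace Stmt12Aux3

noncomputable def sig (a : ℝ) : ℝ := 1 / (1 + exp a)

lemma one_add_exp_pos (a : ℝ) : 0 < 1 + exp a := by positivity

lemma sig_pos (a : ℝ) : 0 < sig a := by
  unfold sig; positivity

lemma sig_lt_one (a : ℝ) : sig a < 1 := by
  unfold sig
  rw [div_lt_one (one_add_exp_pos a)]
  linarith [exp_pos a]

lemma sig_le_one (a : ℝ) : sig a ≤ 1 := (sig_lt_one a).le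

lemma log_sig (a : ℝ) : log (sig a) = -log (1 + exp a) := by
  unfold sig
  rw [one_div, log_inv]

lemma one_sub_sig (a : ℝ) : 1 - sig a = exp a / (1 + exp a) := by
  unfold sig
  field_simp
  ring

lemma log_one_sub_sig (a : ℝ) : log (1 - sig a) = a - log (1 + exp a) := by
  rw [one_sub_sig, log_div (exp_pos a).ne' (one_add_exp_pos a).ne', log_exp]

lemma log_one_add_exp_neg (a : ℝ) : log (1 + exp (-a)) = log (1 + exp a) - a := by
  have h : 1 + exp (-a) = (1 + exp a) * exp (-a) := by
    rw [exp_neg]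
    field_simp
    ring
  rw [h, log_mul (one_add_exp_pos a).ne' (exp_pos (-a)).ne', log_exp]
  ring

lemma kl_nonneg {t q : ℝ} (ht0 : 0 ≤ t) (ht1 : t ≤ 1) (hq0 : 0 < q) (hq1 : q < 1) :
    0 ≤ t * (log t - log q) + (1 - t) * (log (1 - t) - log (1 - q)) := by
  rcases eq_or_lt_of_le ht0 with h0 | h0
  · have : t = 0 := h0.symm
    subst this
    simp only [zero_mul, sub_zero, one_mul, zero_add]
    have := log_nonpos (by linarith) (by linarith : (1:ℝ) - q ≤ 1)
    simp only [Real.log_one]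
    linarith
  rcases eq_or_lt_of_le ht1 with h1 | h1
  · subst h1
    simp only [sub_self, zero_mul, add_zero, one_mul, Real.log_one]
    have := log_nonpos hq0.le hq1.le
    linarith
  · have h1t : 0 < 1 - t := by linarith
    have h1q : 0 < 1 - q := by linarith
    have hq : log q - log t ≤ q / t - 1 := by
      have h := log_le_sub_one_of_pos (div_pos hq0 h0)
      rwa [log_div hq0.ne' h0.ne'] at h
    have hq' : log (1 - q) - log (1 - t) ≤ (1 - q) / (1 - t) - 1 := by
      have h := log_le_sub_one_of_pos (div_pos h1q h1t)
      rwa [log_div h1q.ne' h1t.ne'] at h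
    have e1 : t * (q / t) = q := by field_simp
    have e2 : (1 - t) * ((1 - q) / (1 - t)) = 1 - q := by field_simp
    nlinarith [mul_le_mul_of_nonneg_left hq h0.le,
      mul_le_mul_of_nonneg_left hq' h1t.le]

lemma fenchel_eq (a : ℝ) :
    (-(sig a) * log (sig a) - (1 - sig a) * log (1 - sig a)) - sig a * a
      = log (1 + exp (-a)) := by
  rw [log_sig, log_one_sub_sig, log_one_add_exp_neg]
  ring

lemma fenchel_le {t : ℝ} (ht0 : 0 ≤ t) (ht1 : t ≤ 1) (a : ℝ) :
    (-t * log t - (1 - t) * log (1 - t)) - t * a ≤ log (1 + exp (-a)) := by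
  have hkl := kl_nonneg ht0 ht1 (sig_pos a) (sig_lt_one a)
  have hid : log (1 + exp (-a)) - ((-t * log t - (1 - t) * log (1 - t)) - t * a)
      = t * (log t - log (sig a)) + (1 - t) * (log (1 - t) - log (1 - sig a)) := by
    rw [log_sig, log_one_sub_sig, log_one_add_exp_neg]
    ring
  linarith [hid ▸ hkl]

lemma exp_quad {x : ℝ} (hx : |x| ≤ 1) : exp x - 1 - x ≤ x ^ 2 := by
  have h := Real.exp_bound hx (n := 2) (by norm_num)
  have hsum : ∑ i ∈ Finset.range 2, x ^ i / (Nat.factorial i : ℝ) = 1 + x := by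
    simp [Finset.sum_range_succ]
  rw [hsum] at h
  have h2 : |x| ^ 2 * ((2 + 1 : ℕ) / ((Nat.factorial 2 : ℕ) * 2) : ℝ) = x ^ 2 * (3 / 4) := by
    rw [sq_abs]
    norm_num [Nat.factorial]
  have := abs_le.mp h
  nlinarith [sq_abs x, this.2]

lemma smooth_step (a u : ℝ) (hu : |u| ≤ 1) :
    log (1 + exp (-(a + u))) ≤ log (1 + exp (-a)) - sig a * u + u ^ 2 := by
  have hp1 := one_add_exp_pos (-(a + u))
  have hp2 := one_add_exp_pos (-a)
  have h1 : log (1 + exp (-(a + u))) - log (1 + exp (-a)) ≤ sig a * (exp (-u) - 1) := by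
    have hlog := log_le_sub_one_of_pos (div_pos hp1 hp2)
    rw [log_div hp1.ne' hp2.ne'] at hlog
    have hratio : (1 + exp (-(a + u))) / (1 + exp (-a)) - 1 = sig a * (exp (-u) - 1) := by
      unfold sig
      rw [neg_add, exp_add, exp_neg a, exp_neg u]
      have hea := (exp_pos a).ne'
      field_simp
      ring
    linarith [hratio ▸ hlog]
  have h2 : 0 ≤ exp (-u) - 1 + u := by linarith [Real.add_one_le_exp (-u)]
  have h3 : exp (-u) - 1 + u ≤ u ^ 2 := by
    have := exp_quad (x := -u) (by simpa using hu)
    nlinarith [this]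
  have hs0 := (sig_pos a).le
  have hs1 := sig_le_one a
  nlinarith [mul_nonneg hs0 h2, mul_le_mul_of_nonneg_right (sig_le_one a) h2]

end Stmt12Aux3


open Stmt12Aux Stmt12Aux2 Stmt12Aux3 in
theorem stmt_12' {V : Type*} [Fintype V] [DecidableEq V]
    (F : Finset V → ℝ) (hsub : Submodular F) (hF0 : F ∅ = 0) :
    ∃ m : ℝ,
      IsLeast {x : ℝ | ∃ s ∈ basePolytope F,
        x = ∑ i : V, Real.log (1 + Real.exp (-(s i)))} m ∧
      IsGreatest {x : ℝ | ∃ p : V → ℝ, (∀ i, p i ∈ Set.Icc (0:ℝ) 1) ∧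
        x = bernoulliEntropy p - lovasz F p} m := by
  classical
  set Φ : (V → ℝ) → ℝ := fun s => ∑ i : V, Real.log (1 + Real.exp (-(s i))) with hPhidef
  -- nonemptiness of the base polytope via the greedy vertex
  obtain ⟨e0, _⟩ := exists_sorted (fun _ : V => (0 : ℝ))
  have hmem0 : greedy F e0 ∈ basePolytope F :=
    ⟨greedy_packing hsub hF0 e0, greedy_total hF0 e0⟩
  -- compactness of the base polytope
  have hcsum : ∀ A : Finset V, Continuous (fun s : V → ℝ => ∑ i ∈ A, s i) :=
    fun A => continuous_finset_sum A (fun i _ => continuous_apply i)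
  have hclosed : IsClosed (basePolytope F) := by
    have h1 : basePolytope F =
        (⋂ A : Finset V, {s : V → ℝ | ∑ i ∈ A, s i ≤ F A}) ∩
          {s : V → ℝ | ∑ i : V, s i = F Finset.univ} := by
      ext s; simp [basePolytope, Set.mem_iInter]
    rw [h1]
    exact (isClosed_iInter fun A => isClosed_le (hcsum A) continuous_const).inter
      (isClosed_eq (hcsum Finset.univ) continuous_const)
  have hsubK : basePolytope F ⊆ Set.pi Set.univ
      (fun i => Set.Icc (F Finset.univ - F (Finset.univ.erase i)) (F {i})) := by
    rintro s ⟨h1, h2⟩ i -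
    constructor
    · have h3 := h1 (Finset.univ.erase i)
      have h4 : s i + ∑ j ∈ Finset.univ.erase i, s j = F Finset.univ := by
        rw [Finset.add_sum_erase _ _ (Finset.mem_univ i), h2]
      linarith
    · have h5 := h1 {i}
      simpa using h5
  have hK : IsCompact (basePolytope F) :=
    IsCompact.of_isClosed_subset (isCompact_univ_pi fun i => isCompact_Icc) hclosed hsubK
  have hcont : Continuous Φ := by
    apply continuous_finset_sum
    intro i _
    have h1 : Continuous fun s : V → ℝ => 1 + Real.exp (-(s i)) :=
      continuous_const.add (Real.continuous_exp.comp (continuous_apply i).neg)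
    exact h1.log (fun s => by positivity)
  obtain ⟨sstar, hsmem, hsmin'⟩ := hK.exists_isMinOn ⟨_, hmem0⟩ hcont.continuousOn
  have hsmin : ∀ s ∈ basePolytope F, Φ sstar ≤ Φ s := fun s hs => (isMinOn_iff.mp hsmin') s hs
  -- the Lovász extension via the greedy vertex
  have hlov : ∀ p' : V → ℝ, (∀ i, p' i ∈ Set.Icc (0:ℝ) 1) →
      ∀ e' : Fin (Fintype.card V) ≃ V, (Antitone fun j => p' (e' j)) →
      lovasz F p' = ∑ i : V, p' i * greedy F e' i := by
    intro p' hp' e' hA'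
    unfold lovasz
    have hfe : (fun t : ℝ => F (Finset.univ.filter fun i => t ≤ p' i))
        = fun t : ℝ => ∑ i ∈ Finset.univ.filter (fun i => t ≤ p' i), greedy F e' i :=
      funext fun t => F_filter_eq hF0 e' hA' t
    rw [hfe]
    exact integral_layer p' (greedy F e') hp'
  -- weak duality
  have hweak : ∀ p' : V → ℝ, (∀ i, p' i ∈ Set.Icc (0:ℝ) 1) →
      ∀ s : V → ℝ, (∀ A : Finset V, ∑ i ∈ A, s i ≤ F A) →
      ∑ i : V, p' i * s i ≤ lovasz F p' := by
    intro p' hp' s hs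
    obtain ⟨e', hA'⟩ := exists_sorted p'
    rw [hlov p' hp' e' hA', ← integral_layer p' s hp',
      ← integral_layer p' (greedy F e') hp']
    apply intervalIntegral.integral_mono_on (by norm_num) (integrable_layer p' s)
      (integrable_layer p' (greedy F e'))
    intro t _
    rw [← F_filter_eq hF0 e' hA' t]
    exact hs _
  -- the optimal primal point
  set p : V → ℝ := fun i => sig (sstar i) with hpdef
  obtain ⟨e, hA⟩ := exists_sorted p
  set g : V → ℝ := greedy F e with hgdef
  have hp : ∀ i, p i ∈ Set.Icc (0:ℝ) 1 := fun i => ⟨(sig_pos _).le, sig_le_one _⟩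
  -- key first-order optimality
  have hkey : ∑ i : V, p i * g i ≤ ∑ i : V, p i * sstar i := by
    by_contra hcon
    push_neg at hcon
    set v : V → ℝ := fun i => g i - sstar i with hvdef
    set X := ∑ i : V, p i * v i with hXdef
    have hX : 0 < X := by
      have hXe : X = ∑ i : V, p i * g i - ∑ i : V, p i * sstar i := by
        rw [hXdef, ← Finset.sum_sub_distrib]
        exact Finset.sum_congr rfl fun i _ => by simp [hvdef]; ring
      linarith
    set C := ∑ i : V, v i ^ 2 with hCdef
    have hC0 : 0 ≤ C := Finset.sum_nonneg fun i _ => sq_nonneg _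
    set M := 1 + ∑ i : V, |v i| with hMdef
    have hM1 : 1 ≤ M := by
      have h6 : 0 ≤ ∑ i : V, |v i| := Finset.sum_nonneg fun i _ => abs_nonneg _
      linarith
    have hMi : ∀ i, |v i| ≤ M := by
      intro i
      have h7 := Finset.single_le_sum (f := fun i => |v i|)
        (fun j _ => abs_nonneg _) (Finset.mem_univ i)
      linarith
    set θ := min (1 / M) (X / (2 * (C + 1))) with hthdef
    have hM0 : (0:ℝ) < M := by linarith
    have hθpos : 0 < θ := lt_min (by positivity) (by positivity)
    have hθ1 : θ ≤ 1 := le_trans (min_le_left _ _) (by rw [div_le_one hM0]; linarith)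
    have hui : ∀ i, |θ * v i| ≤ 1 := by
      intro i
      rw [abs_mul, abs_of_pos hθpos]
      calc θ * |v i| ≤ (1 / M) * M :=
            mul_le_mul (min_le_left _ _) (hMi i) (abs_nonneg _) (by positivity)
        _ = 1 := by field_simp
    have hsθ : (fun i => sstar i + θ * v i) ∈ basePolytope F := by
      have hsum : ∀ A : Finset V, ∑ i ∈ A, (sstar i + θ * v i)
          = (1 - θ) * ∑ i ∈ A, sstar i + θ * ∑ i ∈ A, g i := by
        intro A
        rw [Finset.mul_sum, Finset.mul_sum, ← Finset.sum_add_distrib]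
        exact Finset.sum_congr rfl fun i _ => by simp [hvdef]; ring
      constructor
      · intro A
        rw [hsum A]
        have h1 := hsmem.1 A
        have h2 := greedy_packing hsub hF0 e A
        nlinarith
      · rw [hsum Finset.univ, hsmem.2, hgdef, greedy_total hF0 e]
        ring
    have hmin := hsmin _ hsθ
    have hstep : Φ (fun i => sstar i + θ * v i) ≤ Φ sstar - θ * X + θ ^ 2 * C := by
      have h1 : ∀ i : V, Real.log (1 + Real.exp (-(sstar i + θ * v i)))
          ≤ Real.log (1 + Real.exp (-(sstar i))) - p i * (θ * v i) + (θ * v i) ^ 2 :=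
        fun i => smooth_step (sstar i) (θ * v i) (hui i)
      calc Φ (fun i => sstar i + θ * v i)
          = ∑ i : V, Real.log (1 + Real.exp (-(sstar i + θ * v i))) := rfl
        _ ≤ ∑ i : V, (Real.log (1 + Real.exp (-(sstar i))) - p i * (θ * v i) + (θ * v i) ^ 2) :=
            Finset.sum_le_sum fun i _ => h1 i
        _ = Φ sstar - θ * X + θ ^ 2 * C := by
            rw [hPhidef, hXdef, hCdef, Finset.mul_sum, Finset.mul_sum,
              Finset.sum_add_distrib, Finset.sum_sub_distrib]
            congr 1
            · congr 1
              exact Finset.sum_congr rfl fun i _ => by ring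
            · exact Finset.sum_congr rfl fun i _ => by ring
    have hXθ : X ≤ θ * C := by
      have h4 : θ * X ≤ θ ^ 2 * C := by linarith
      by_contra hc2
      push_neg at hc2
      nlinarith [mul_lt_mul_of_pos_left hc2 hθpos]
    have hθ2 : θ ≤ X / (2 * (C + 1)) := min_le_right _ _
    have hfe : X / (2 * (C + 1)) * (2 * (C + 1)) = X := by field_simp
    have hθ2pos : 0 < X / (2 * (C + 1)) := by positivity
    nlinarith [mul_le_mul_of_nonneg_right hθ2 hC0, mul_nonneg hθ2pos.le hC0]
  -- strong duality at the optimum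
  have hlovp : lovasz F p = ∑ i : V, p i * sstar i := by
    refine le_antisymm ?_ (hweak p hp sstar hsmem.1)
    rw [hlov p hp e hA]
    exact hkey
  refine ⟨Φ sstar, ⟨⟨sstar, hsmem, rfl⟩, ?_⟩, ⟨⟨p, hp, ?_⟩, ?_⟩⟩
  · rintro x ⟨s, hs, rfl⟩
    exact hsmin s hs
  · rw [hlovp]
    unfold bernoulliEntropy
    rw [← Finset.sum_sub_distrib]
    exact (Finset.sum_congr rfl fun i _ => fenchel_eq (sstar i)).symm
  · rintro x ⟨p', hp', rfl⟩
    have h1 := hweak p' hp' sstar hsmem.1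
    have h2 : bernoulliEntropy p' - ∑ i : V, p' i * sstar i
        ≤ ∑ i : V, Real.log (1 + Real.exp (-(sstar i))) := by
      unfold bernoulliEntropy
      rw [← Finset.sum_sub_distrib]
      exact Finset.sum_le_sum fun i _ => fenchel_le (hp' i).1 (hp' i).2 (sstar i)
    have h3 : Φ sstar = ∑ i : V, Real.log (1 + Real.exp (-(sstar i))) := rfl
    linarith

/-- Fenchel duality:
`min_{s∈B(F)} ∑ log(1+exp(-sᵢ)) = max_{p∈[0,1]^V} (H[p] - f(p))`. -/
theorem stmt_12 {V : Type*} [Fintype V] [DecidableEq V]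
    (F : Finset V → ℝ) (hsub : Submodular F) (hF0 : F ∅ = 0) :
    ∃ m : ℝ,
      IsLeast {x : ℝ | ∃ s ∈ basePolytope F,
        x = ∑ i : V, Real.log (1 + Real.exp (-(s i)))} m ∧
      IsGreatest {x : ℝ | ∃ p : V → ℝ, (∀ i, p i ∈ Set.Icc (0:ℝ) 1) ∧
        x = bernoulliEntropy p - lovasz F p} m := by
  exact stmt_12' F hsub hF0
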